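/- arXiv:0809.4601 — 4 statements merged into one kernel-verified Lean document; each statement's English description precedes it below -/
import Mathlib

section
/- Let x_1, …, x_m ∈ [−M, M] be real numbers, C_1, …, C_m nonnegative definite p×p Hermitian matrices with Σ_j C_j = I_p, and z ∈ ℂ with |z| > M. Then for every nonzero v ∈ ℂ^p, |v* (Σ_j C_j/(z − x_j)) v| > (v*v)/(2|z|). -/
open Matrix
open scoped ComplexOrder


private lemma dot_sum_aux {m p : ℕ} (A : Fin m → Matrix (Fin p) (Fin p) ℂ)
    (u v : Fin p → ℂ) :
    u ⬝ᵥ ((∑ j, A j) *ᵥ v) = ∑ j, u ⬝ᵥ (A j *ᵥ v) := by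
  have h : (∑ j, A j) *ᵥ v = ∑ j, A j *ᵥ v := by
    funext i
    simp only [Matrix.mulVec, dotProduct, Matrix.sum_apply, Finset.sum_mul,
      Finset.sum_apply]
    exact Finset.sum_comm
  rw [h]
  simp only [dotProduct, Finset.sum_apply, Finset.mul_sum]
  exact Finset.sum_comm

theorem quadratic_form_resolvent_lower_bound (p m : ℕ) (M : ℝ) (hM : 0 < M)
    (x : Fin m → ℝ) (hx : ∀ j, x j ∈ Set.Icc (-M) M)
    (C : Fin m → Matrix (Fin p) (Fin p) ℂ)
    (hC : ∀ j, (C j).PosSemidef)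
    (hsum : ∑ j, C j = 1)
    (z : ℂ) (hz : M < ‖z‖) :
    ∀ v : Fin p → ℂ, v ≠ 0 →
      ‖star v ⬝ᵥ v‖ / (2 * ‖z‖) <
        ‖star v ⬝ᵥ ((∑ j, (z - (x j : ℂ))⁻¹ • C j) *ᵥ v)‖ := by
  intro v hv
  have hzpos : (0:ℝ) < ‖z‖ := lt_trans hM hz
  set q : Fin m → ℂ := fun j => star v ⬝ᵥ (C j *ᵥ v) with hqdef
  have hq0 : ∀ j, 0 ≤ (q j).re ∧ (q j).im = 0 := by
    intro j
    have h := (hC j).dotProduct_mulVec_nonneg v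
    rw [Complex.le_def] at h
    simpa using ⟨h.1, h.2.symm⟩
  -- sum of q equals star v ⬝ᵥ v
  have hQsum : ∑ j, q j = star v ⬝ᵥ v := by
    have h := dot_sum_aux C (star v) v
    rw [hsum, Matrix.one_mulVec] at h
    exact h.symm
  set Q : ℂ := star v ⬝ᵥ v with hQdef
  have hQre : Q.re = ∑ j, (q j).re := by
    rw [← hQsum, Complex.re_sum]
  have hQim : Q.im = 0 := by
    rw [← hQsum, Complex.im_sum]
    exact Finset.sum_eq_zero fun j _ => (hq0 j).2
  have hQpos : 0 < Q.re := by
    have : Q.re = ∑ i, Complex.normSq (v i) := by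
      simp [hQdef, dotProduct, Complex.re_sum, Complex.mul_re, Complex.normSq_apply,
        mul_comm]
    rw [this]
    obtain ⟨i, hi⟩ := Function.ne_iff.mp hv
    exact Finset.sum_pos' (fun i _ => Complex.normSq_nonneg _)
      ⟨i, Finset.mem_univ i, Complex.normSq_pos.mpr hi⟩
  -- the quadratic form
  set T : ℂ := star v ⬝ᵥ ((∑ j, (z - (x j : ℂ))⁻¹ • C j) *ᵥ v) with hTdef
  have hT : T = ∑ j, (z - (x j : ℂ))⁻¹ * q j := by
    rw [hTdef, dot_sum_aux]
    refine Finset.sum_congr rfl fun j _ => ?_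
    rw [Matrix.smul_mulVec, dotProduct_smul, smul_eq_mul]
  -- key half bound
  have hkey : ∀ j, (1:ℝ)/2 < (z * (z - (x j : ℂ))⁻¹).re := by
    intro j
    obtain ⟨h1, h2⟩ := hx j
    have hx2 : (x j)^2 < Complex.normSq z := by
      have : (x j)^2 ≤ M^2 := by nlinarith
      have hM2 : M^2 < Complex.normSq z := by
        rw [← Complex.sq_norm]; nlinarith
      linarith
    have hw : z - (x j : ℂ) ≠ 0 := by
      intro h
      have : z = (x j : ℂ) := by linear_combination h
      rw [this] at hz
      rw [Complex.norm_real, Real.norm_eq_abs] at hz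
      rcases abs_cases (x j) with ⟨h3, _⟩ | ⟨h3, _⟩ <;> linarith
    have hD : 0 < Complex.normSq (z - (x j : ℂ)) :=
      Complex.normSq_pos.mpr hw
    rw [mul_comm, ← div_eq_inv_mul, Complex.div_re]
    have hre : (z - (x j : ℂ)).re = z.re - x j := by simp
    have him : (z - (x j : ℂ)).im = z.im := by simp
    rw [hre, him]
    rw [← add_div, lt_div_iff₀ hD]
    have hDval : Complex.normSq (z - (x j : ℂ)) =
        Complex.normSq z - 2 * x j * z.re + (x j)^2 := by
      rw [Complex.normSq_apply, Complex.normSq_apply, hre, him]; ring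
    rw [hDval]
    have : Complex.normSq z = z.re * z.re + z.im * z.im := Complex.normSq_apply z
    nlinarith
  -- real part bound
  have hzT : Q.re / 2 < (z * T).re := by
    rw [hT, Finset.mul_sum, Complex.re_sum, hQre, Finset.sum_div]
    obtain ⟨j0, hj0mem, hj0⟩ : ∃ j ∈ Finset.univ, 0 < (q j).re := by
      by_contra h
      push_neg at h
      have : ∑ j, (q j).re ≤ 0 :=
        Finset.sum_nonpos fun j hj => h j hj
      rw [← hQre] at this; linarith
    apply Finset.sum_lt_sum
    · intro j _
      have h1 : (z * ((z - (x j : ℂ))⁻¹ * q j)).re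
          = (z * (z - (x j : ℂ))⁻¹).re * (q j).re := by
        rw [← mul_assoc, Complex.mul_re, (hq0 j).2, mul_zero, sub_zero]
      rw [h1]
      have := hkey j
      have := (hq0 j).1
      nlinarith
    · refine ⟨j0, hj0mem, ?_⟩
      have h1 : (z * ((z - (x j0 : ℂ))⁻¹ * q j0)).re
          = (z * (z - (x j0 : ℂ))⁻¹).re * (q j0).re := by
        rw [← mul_assoc, Complex.mul_re, (hq0 j0).2, mul_zero, sub_zero]
      rw [h1]
      have := hkey j0
      nlinarith
  -- conclude
  have habsQ : ‖Q‖ = Q.re := by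
    have hQeq : Q = (Q.re : ℂ) := Complex.ext (by simp) (by simp [hQim])
    rw [hQeq, Complex.norm_real, Real.norm_eq_abs, abs_of_pos hQpos, Complex.ofReal_re]
  have h1 : (z * T).re ≤ ‖z * T‖ := Complex.re_le_norm _
  rw [norm_mul] at h1
  have h2 : Q.re / 2 < ‖z‖ * ‖T‖ := lt_of_lt_of_le hzT h1
  rw [habsQ, div_lt_iff₀ (by positivity)]
  nlinarith
end

section
/- Let X be a chi-distributed random variable with k degrees of freedom (i.e., X² ~ χ²_k). Then for every ε > 0, P(|X − √k| ≥ ε) ≤ 2·exp(−ε²/2). -/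
open MeasureTheory ProbabilityTheory

open Real

open scoped ENNReal NNReal

lemma gauss_sq_eq (t : ℝ) (x : ℝ) :
    gaussianPDFReal 0 1 x * Real.exp (t * x ^ 2)
      = (Real.sqrt (2 * π))⁻¹ * Real.exp (-(1/2 - t) * x ^ 2) := by
  simp only [gaussianPDFReal, NNReal.coe_one, mul_one, sub_zero]
  rw [mul_assoc, ← Real.exp_add]
  ring_nf

lemma gauss_sq_integrable_vol {t : ℝ} (ht : t < 1/2) :
    Integrable (fun x : ℝ => gaussianPDFReal 0 1 x * Real.exp (t * x ^ 2)) := by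
  simp only [gauss_sq_eq t]
  exact (integrable_exp_neg_mul_sq (by linarith)).const_mul _

lemma gauss_sq_integral_vol {t : ℝ} (ht : t < 1/2) :
    ∫ x : ℝ, gaussianPDFReal 0 1 x * Real.exp (t * x ^ 2)
      = (Real.sqrt (1 - 2 * t))⁻¹ := by
  simp only [gauss_sq_eq t]
  rw [integral_const_mul, integral_gaussian]
  rw [← Real.sqrt_inv (2 * π), ← Real.sqrt_mul (by positivity)]
  rw [← Real.sqrt_inv (1 - 2*t)]
  congr 1
  have hπ := Real.pi_pos
  have h2 : (0:ℝ) < 1 - 2 * t := by linarith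
  have h3 : (1:ℝ)/2 - t ≠ 0 := by linarith
  field_simp

lemma gauss_sq_integrable {t : ℝ} (ht : t < 1/2) :
    Integrable (fun x : ℝ => Real.exp (t * x ^ 2)) (gaussianReal 0 1) := by
  rw [gaussianReal_of_var_ne_zero 0 one_ne_zero]
  rw [show gaussianPDF 0 1 = fun x => ((gaussianPDFReal 0 1 x).toNNReal : ℝ≥0∞) from rfl]
  rw [integrable_withDensity_iff_integrable_smul
    ((measurable_gaussianPDFReal 0 1).real_toNNReal)]
  have : (fun x : ℝ => (gaussianPDFReal 0 1 x).toNNReal • Real.exp (t * x ^ 2))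
      = fun x : ℝ => gaussianPDFReal 0 1 x * Real.exp (t * x ^ 2) := by
    funext x
    simp [NNReal.smul_def, Real.coe_toNNReal _ (gaussianPDFReal_nonneg 0 1 x)]
  rw [this]
  exact gauss_sq_integrable_vol ht

lemma gauss_sq_integral {t : ℝ} (ht : t < 1/2) :
    ∫ x, Real.exp (t * x ^ 2) ∂(gaussianReal 0 1) = (Real.sqrt (1 - 2 * t))⁻¹ := by
  rw [gaussianReal_of_var_ne_zero 0 one_ne_zero]
  rw [show gaussianPDF 0 1 = fun x => ((gaussianPDFReal 0 1 x).toNNReal : ℝ≥0∞) from rfl]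
  rw [integral_withDensity_eq_integral_smul ((measurable_gaussianPDFReal 0 1).real_toNNReal)]
  have : (fun x : ℝ => (gaussianPDFReal 0 1 x).toNNReal • Real.exp (t * x ^ 2))
      = fun x : ℝ => gaussianPDFReal 0 1 x * Real.exp (t * x ^ 2) := by
    funext x
    simp [NNReal.smul_def, Real.coe_toNNReal _ (gaussianPDFReal_nonneg 0 1 x)]
  rw [this]
  exact gauss_sq_integral_vol ht

lemma chi_mgf_aux {Ω : Type*} [MeasurableSpace Ω] (μ : Measure Ω) [IsProbabilityMeasure μ]
    {k : ℕ} {Z : Fin k → Ω → ℝ} (hmeas : ∀ i, Measurable (Z i))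
    (hindep : iIndepFun Z μ)
    (hdist : ∀ i, Measure.map (Z i) μ = gaussianReal 0 1) {t : ℝ} (ht : t < 1/2) :
    Integrable (fun ω => Real.exp (t * ∑ i, Z i ω ^ 2)) μ ∧
      mgf (fun ω => ∑ i, Z i ω ^ 2) μ t = ((Real.sqrt (1 - 2 * t))⁻¹) ^ k := by
  have hSq : ∀ i : Fin k, Measurable fun ω => Z i ω ^ 2 := fun i => (hmeas i).pow_const 2
  have hindep2 : iIndepFun (fun i ω => Z i ω ^ 2) μ :=
    hindep.comp (fun _ x => x ^ 2) (fun _ => measurable_id.pow_const 2)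
  have hgm : Measurable fun x : ℝ => Real.exp (t * x ^ 2) := by fun_prop
  have hint : ∀ i : Fin k, Integrable (fun ω => Real.exp (t * Z i ω ^ 2)) μ := by
    intro i
    have h1 : Integrable (fun x : ℝ => Real.exp (t * x ^ 2)) (Measure.map (Z i) μ) := by
      rw [hdist i]; exact gauss_sq_integrable ht
    rw [integrable_map_measure hgm.aestronglyMeasurable (hmeas i).aemeasurable] at h1
    exact h1
  constructor
  · have := hindep2.integrable_exp_mul_sum hSq (s := Finset.univ) (fun i _ => hint i)
    simpa [Finset.sum_apply] using this
  · have hsum := hindep2.mgf_sum hSq Finset.univ (t := t)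
    have heq : (∑ i ∈ Finset.univ, fun ω => Z i ω ^ 2) = fun ω => ∑ i, Z i ω ^ 2 := by
      funext ω; simp
    rw [heq] at hsum
    rw [hsum]
    have hone : ∀ i : Fin k, mgf (fun ω => Z i ω ^ 2) μ t = (Real.sqrt (1 - 2 * t))⁻¹ := by
      intro i
      have hmap := integral_map (μ := μ) (φ := Z i) (f := fun x : ℝ => Real.exp (t * x ^ 2))
        (hmeas i).aemeasurable hgm.aestronglyMeasurable
      rw [hdist i, gauss_sq_integral ht] at hmap
      rw [mgf]
      exact hmap.symm
    simp [hone]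

theorem chi_concentration_around_sqrt_k
    {Ω : Type*} [MeasurableSpace Ω] (μ : Measure Ω) [IsProbabilityMeasure μ]
    (k : ℕ) (Z : Fin k → Ω → ℝ)
    (hmeas : ∀ i, Measurable (Z i))
    (hindep : iIndepFun Z μ)
    (hdist : ∀ i, Measure.map (Z i) μ = gaussianReal 0 1)
    (X : Ω → ℝ) (hX : ∀ ω, X ω = Real.sqrt (∑ i, (Z i ω) ^ 2))
    (ε : ℝ) (hε : 0 < ε) :
    μ {ω | ε ≤ |X ω - Real.sqrt k|} ≤ ENNReal.ofReal (2 * Real.exp (-ε ^ 2 / 2)) := by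
  rcases Nat.eq_zero_or_pos k with hk0 | hk
  · subst hk0
    have hempty : {ω | ε ≤ |X ω - Real.sqrt (0:ℕ)|} = ∅ := by
      ext ω
      simp [hX ω, hε.not_ge]
    rw [hempty]
    simp
  set s : ℝ := Real.sqrt k with hs
  have hk' : (0:ℝ) < k := by exact_mod_cast hk
  have hs0 : 0 < s := Real.sqrt_pos.mpr hk'
  have hs2 : s ^ 2 = k := Real.sq_sqrt hk'.le
  set Sf : Ω → ℝ := fun ω => ∑ i, Z i ω ^ 2 with hSfdef
  have hSfnn : ∀ ω, 0 ≤ Sf ω := fun ω => Finset.sum_nonneg fun i _ => sq_nonneg _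
  have hXsq : ∀ ω, X ω ^ 2 = Sf ω := fun ω => by rw [hX ω]; exact Real.sq_sqrt (hSfnn ω)
  have hXnn : ∀ ω, 0 ≤ X ω := fun ω => by rw [hX ω]; exact Real.sqrt_nonneg _
  -- upper tail
  have hA : μ {ω | (s + ε) ^ 2 ≤ Sf ω} ≤ ENNReal.ofReal (Real.exp (-ε ^ 2 / 2)) := by
    set b : ℝ := (s + ε) ^ 2 with hb
    have hbpos : 0 < b := by positivity
    have hkb : (k:ℝ) < b := by rw [← hs2, hb]; nlinarith
    set t : ℝ := (1 - k / b) / 2 with htdef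
    have hdivpos : 0 < (k:ℝ) / b := div_pos hk' hbpos
    have hdivle : (k:ℝ) / b ≤ 1 := (div_le_one hbpos).mpr hkb.le
    have ht0 : 0 ≤ t := by rw [htdef]; linarith
    have ht2 : t < 1/2 := by rw [htdef]; linarith
    obtain ⟨hIntS, hmgfS⟩ := chi_mgf_aux μ hmeas hindep hdist ht2
    have hch := measure_ge_le_exp_mul_mgf (μ := μ) (X := Sf) b ht0 hIntS
    rw [hmgfS] at hch
    have h12t : 1 - 2 * t = (k:ℝ) / b := by rw [htdef]; ring
    have hsqv : (Real.sqrt (1 - 2 * t))⁻¹ = (s + ε) / s := by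
      rw [h12t, show (k:ℝ) / b = (s / (s + ε)) ^ 2 by rw [div_pow, hs2, hb],
        Real.sqrt_sq (by positivity), inv_div]
    have htb : t * b = (b - k) / 2 := by
      rw [htdef]; field_simp
    have hbmk : b - k = 2 * s * ε + ε ^ 2 := by rw [hb, ← hs2]; ring
    have hnum : Real.exp (-t * b) * ((s + ε) / s) ^ k ≤ Real.exp (-ε ^ 2 / 2) := by
      have h1 : (s + ε) / s ≤ Real.exp (ε / s) := by
        have h2 := Real.add_one_le_exp (ε / s)
        have h3 : (s + ε) / s = ε / s + 1 := by field_simp; ring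
        linarith
      have h2 : ((s + ε) / s) ^ k ≤ Real.exp (ε / s) ^ k :=
        pow_le_pow_left₀ (by positivity) h1 k
      calc Real.exp (-t * b) * ((s + ε) / s) ^ k
          ≤ Real.exp (-t * b) * Real.exp (ε / s) ^ k := by
            exact mul_le_mul_of_nonneg_left h2 (Real.exp_nonneg _)
        _ = Real.exp (-t * b + k * (ε / s)) := by
            rw [← Real.exp_nat_mul, ← Real.exp_add]
        _ = Real.exp (-ε ^ 2 / 2) := by
            congr 1
            have hks : (k:ℝ) * (ε / s) = s * ε := by
              rw [← hs2]; field_simp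
            rw [neg_mul, htb, hbmk, hks]
            ring
    calc μ {ω | b ≤ Sf ω} = ENNReal.ofReal (μ {ω | b ≤ Sf ω}).toReal :=
          (ENNReal.ofReal_toReal (measure_ne_top μ _)).symm
      _ ≤ ENNReal.ofReal (Real.exp (-ε ^ 2 / 2)) := by
          apply ENNReal.ofReal_le_ofReal
          refine hch.trans ?_
          rw [hsqv]
          exact hnum
  -- lower tail
  have hB : μ {ω | X ω ≤ s - ε} ≤ ENNReal.ofReal (Real.exp (-ε ^ 2 / 2)) := by
    rcases lt_or_ge ε s with hεs | hεs
    · -- Chernoff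
      have hsub : {ω | X ω ≤ s - ε} ⊆ {ω | Sf ω ≤ (s - ε) ^ 2} := by
        intro ω hω
        simp only [Set.mem_setOf_eq] at hω ⊢
        rw [← hXsq ω]
        exact pow_le_pow_left₀ (hXnn ω) hω 2
      refine (measure_mono hsub).trans ?_
      set a : ℝ := (s - ε) ^ 2 with ha
      have hse : 0 < s - ε := by linarith
      have hapos : 0 < a := by rw [ha]; positivity
      have hka : a < (k:ℝ) := by rw [← hs2, ha]; nlinarith
      set t : ℝ := (1 - k / a) / 2 with htdef
      have hdiv : 1 < (k:ℝ) / a := (one_lt_div hapos).mpr hka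
      have ht0 : t ≤ 0 := by rw [htdef]; linarith
      have ht2 : t < 1/2 := by rw [htdef]; linarith
      obtain ⟨hIntS, hmgfS⟩ := chi_mgf_aux μ hmeas hindep hdist ht2
      have hch := measure_le_le_exp_mul_mgf (μ := μ) (X := Sf) a ht0 hIntS
      rw [hmgfS] at hch
      have h12t : 1 - 2 * t = (k:ℝ) / a := by rw [htdef]; ring
      have hsqv : (Real.sqrt (1 - 2 * t))⁻¹ = (s - ε) / s := by
        rw [h12t, show (k:ℝ) / a = (s / (s - ε)) ^ 2 by
            rw [div_pow, hs2, ha],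
          Real.sqrt_sq (div_nonneg hs0.le hse.le), inv_div]
      have hta : t * a = (a - k) / 2 := by
        rw [htdef]; field_simp
      have hkma : (k:ℝ) - a = 2 * s * ε - ε ^ 2 := by rw [ha, ← hs2]; ring
      have hnum : Real.exp (-t * a) * ((s - ε) / s) ^ k ≤ Real.exp (-ε ^ 2 / 2) := by
        have h1 : (s - ε) / s ≤ Real.exp (-(ε / s)) := by
          have h2 := Real.add_one_le_exp (-(ε / s))
          have h3 : (s - ε) / s = -(ε / s) + 1 := by field_simp; ring
          linarith
        have h2 : ((s - ε) / s) ^ k ≤ Real.exp (-(ε / s)) ^ k :=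
          pow_le_pow_left₀ (div_nonneg hse.le hs0.le) h1 k
        calc Real.exp (-t * a) * ((s - ε) / s) ^ k
            ≤ Real.exp (-t * a) * Real.exp (-(ε / s)) ^ k := by
              exact mul_le_mul_of_nonneg_left h2 (Real.exp_nonneg _)
          _ = Real.exp (-t * a + k * -(ε / s)) := by
              rw [← Real.exp_nat_mul, ← Real.exp_add]
          _ = Real.exp (-ε ^ 2 / 2) := by
              congr 1
              have hks : (k:ℝ) * -(ε / s) = -(s * ε) := by
                rw [← hs2]; field_simp
              rw [neg_mul, hta, hks]
              rw [show a - (k:ℝ) = -(2 * s * ε - ε ^ 2) by linarith [hkma]]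
              ring
      calc μ {ω | Sf ω ≤ a} = ENNReal.ofReal (μ {ω | Sf ω ≤ a}).toReal :=
            (ENNReal.ofReal_toReal (measure_ne_top μ _)).symm
        _ ≤ ENNReal.ofReal (Real.exp (-ε ^ 2 / 2)) := by
            apply ENNReal.ofReal_le_ofReal
            refine hch.trans ?_
            rw [hsqv]
            exact hnum
    · -- event is essentially {Z i0 = 0}, a null set
      have i0 : Fin k := ⟨0, hk⟩
      have hsub : {ω | X ω ≤ s - ε} ⊆ Z i0 ⁻¹' {0} := by
        intro ω hω
        simp only [Set.mem_setOf_eq] at hω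
        have hx0 : X ω = 0 := le_antisymm (hω.trans (by linarith)) (hXnn ω)
        have hSf0 : Sf ω ≤ 0 := by
          rw [← hXsq ω, hx0]; norm_num
        have hterm : Z i0 ω ^ 2 ≤ Sf ω :=
          Finset.single_le_sum (f := fun i => Z i ω ^ 2) (fun i _ => sq_nonneg _)
            (Finset.mem_univ i0)
        have : Z i0 ω ^ 2 = 0 := le_antisymm (hterm.trans hSf0) (sq_nonneg _)
        simpa [pow_eq_zero_iff] using this
      refine (measure_mono hsub).trans ?_
      have hnull : μ (Z i0 ⁻¹' {0}) = 0 := by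
        rw [← Measure.map_apply (hmeas i0) (measurableSet_singleton 0), hdist i0]
        exact (gaussianReal_absolutelyContinuous 0 one_ne_zero) Real.volume_singleton
      rw [hnull]
      exact zero_le
  -- combine
  have hsubset : {ω | ε ≤ |X ω - s|} ⊆ {ω | (s + ε) ^ 2 ≤ Sf ω} ∪ {ω | X ω ≤ s - ε} := by
    intro ω hω
    simp only [Set.mem_setOf_eq] at hω
    rcases le_abs.mp hω with h | h
    · left
      simp only [Set.mem_setOf_eq]
      rw [← hXsq ω]
      exact pow_le_pow_left₀ (by positivity) (by linarith) 2
    · right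
      simp only [Set.mem_setOf_eq]
      linarith
  calc μ {ω | ε ≤ |X ω - s|}
      ≤ μ ({ω | (s + ε) ^ 2 ≤ Sf ω} ∪ {ω | X ω ≤ s - ε}) := measure_mono hsubset
    _ ≤ μ {ω | (s + ε) ^ 2 ≤ Sf ω} + μ {ω | X ω ≤ s - ε} := measure_union_le _ _
    _ ≤ ENNReal.ofReal (Real.exp (-ε ^ 2 / 2)) + ENNReal.ofReal (Real.exp (-ε ^ 2 / 2)) :=
        add_le_add hA hB
    _ = ENNReal.ofReal (2 * Real.exp (-ε ^ 2 / 2)) := by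
        rw [← ENNReal.ofReal_add (Real.exp_nonneg _) (Real.exp_nonneg _), two_mul]
end

section
/- Let λ_1 ≤ … ≤ λ_n and x_1 ≤ … ≤ x_n be real numbers, and let F and G be the empirical distribution functions of {λ_j} and {x_j} respectively. Then the Lévy distance L(F, G) satisfies L(F, G)³ ≤ (1/n)·Σ_{j=1}^n (λ_j − x_j)². -/
/-- The empirical distribution function of the points `y 0, …, y (n-1)`. -/
noncomputable def empCDF (n : ℕ) (y : Fin n → ℝ) (t : ℝ) : ℝ :=
  ((Finset.univ.filter fun j => y j ≤ t).card : ℝ) / n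

/-- The Lévy distance between two distribution functions. -/
noncomputable def levyDist (F G : ℝ → ℝ) : ℝ :=
  sInf {ε : ℝ | 0 < ε ∧ ∀ x, F (x - ε) - ε ≤ G x ∧ G x ≤ F (x + ε) + ε}

open Finset

lemma card_filter_val_lt {n m : ℕ} :
    ((Finset.univ : Finset (Fin n)).filter fun i : Fin n => (i : ℕ) < m).card ≤ m := by
  classical
  calc ((Finset.univ : Finset (Fin n)).filter fun i : Fin n => (i : ℕ) < m).card
      ≤ (Finset.range m).card := by
        refine Finset.card_le_card_of_injOn (fun i => (i : ℕ)) ?_ ?_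
        · intro i hi; simp only [mem_coe, coe_filter, mem_filter, mem_univ, true_and, Set.mem_setOf_eq] at hi
          simpa using hi
        · intro a _ b _ h; exact Fin.val_injective h
    _ = m := Finset.card_range m

lemma mono_filter_eq {n : ℕ} (y : Fin n → ℝ) (hy : Monotone y) (t : ℝ) :
    (Finset.univ.filter fun j => y j ≤ t)
      = Finset.univ.filter
          fun j : Fin n => (j : ℕ) < (Finset.univ.filter fun j => y j ≤ t).card := by
  classical
  ext j
  simp only [mem_filter, mem_univ, true_and]
  constructor
  · intro hj
    have hsub : Finset.Iic j ⊆ Finset.univ.filter fun j => y j ≤ t := by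
      intro i hi
      simp only [Finset.mem_Iic] at hi
      simp only [mem_filter, mem_univ, true_and]
      exact le_trans (hy hi) hj
    have hc := Finset.card_le_card hsub
    rw [Fin.card_Iic] at hc
    omega
  · intro hj
    by_contra h
    have hsub : (Finset.univ.filter fun j => y j ≤ t)
        ⊆ Finset.univ.filter fun i : Fin n => (i : ℕ) < (j : ℕ) := by
      intro i hi
      simp only [mem_filter, mem_univ, true_and] at hi ⊢
      by_contra hlt
      push_neg at hlt
      exact h (le_trans (hy (by exact_mod_cast hlt)) hi)
    have h1 := Finset.card_le_card hsub
    have h2 := card_filter_val_lt (n := n) (m := (j : ℕ))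
    omega

lemma step {n : ℕ} (hn : 0 < n) (lam x : Fin n → ℝ) (hlam : Monotone lam) (hx : Monotone x)
    (ε : ℝ) (hε : 0 < ε) (hlt : ∑ j, (lam j - x j) ^ 2 < (n : ℝ) * ε ^ 3) (t : ℝ) :
    ((Finset.univ.filter fun j => lam j ≤ t - ε).card : ℝ) / n - ε
      ≤ ((Finset.univ.filter fun j => x j ≤ t).card : ℝ) / n := by
  classical
  by_contra h
  push_neg at h
  set a := (Finset.univ.filter fun j => lam j ≤ t - ε).card with ha
  set b := (Finset.univ.filter fun j => x j ≤ t).card with hb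
  have hnpos : (0 : ℝ) < n := Nat.cast_pos.mpr hn
  have hdiv : (a : ℝ) / n * n = a := div_mul_cancel₀ _ hnpos.ne'
  have hab : (n : ℝ) * ε < (a : ℝ) - b := by
    rw [div_lt_iff₀ hnpos] at h
    nlinarith
  have hba : b < a := by
    have : (b : ℝ) < a := by nlinarith
    exact_mod_cast this
  have hSl := mono_filter_eq lam hlam (t - ε)
  have hSx := mono_filter_eq x hx t
  set T := (Finset.univ.filter fun j => lam j ≤ t - ε) \ (Finset.univ.filter fun j => x j ≤ t)
    with hT
  have hsub : (Finset.univ.filter fun j => x j ≤ t)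
      ⊆ (Finset.univ.filter fun j => lam j ≤ t - ε) := by
    rw [hSl, hSx]
    intro i hi
    simp only [mem_filter, mem_univ, true_and] at hi ⊢
    omega
  have hcardT : T.card = a - b := by
    rw [hT, Finset.card_sdiff_of_subset hsub]
  have hterm : ∀ j ∈ T, ε ^ 2 ≤ (lam j - x j) ^ 2 := by
    intro j hj
    rw [hT, Finset.mem_sdiff] at hj
    simp only [mem_filter, mem_univ, true_and] at hj
    obtain ⟨h1, h2⟩ := hj
    push_neg at h2
    nlinarith
  have hsumT : (T.card : ℝ) * ε ^ 2 ≤ ∑ j ∈ T, (lam j - x j) ^ 2 := by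
    calc (T.card : ℝ) * ε ^ 2 = T.card • ε ^ 2 := by simp [nsmul_eq_mul]
    _ ≤ ∑ j ∈ T, (lam j - x j) ^ 2 := Finset.card_nsmul_le_sum T _ _ hterm
  have hsumfull : ∑ j ∈ T, (lam j - x j) ^ 2 ≤ ∑ j, (lam j - x j) ^ 2 :=
    Finset.sum_le_sum_of_subset_of_nonneg (Finset.subset_univ T)
      (fun j _ _ => sq_nonneg _)
  have hTc : ((a : ℝ) - b) * ε ^ 2 ≤ ∑ j, (lam j - x j) ^ 2 := by
    have hc : ((T.card : ℝ)) = (a : ℝ) - b := by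
      rw [hcardT]; push_cast [Nat.cast_sub hba.le]; ring
    nlinarith [hsumT, hsumfull]
  nlinarith [hab, hTc, sq_nonneg ε, hε]

theorem levy_dist_cubed_le_mean_square (n : ℕ) (hn : 0 < n)
    (lam x : Fin n → ℝ) (hlam : Monotone lam) (hx : Monotone x) :
    levyDist (empCDF n lam) (empCDF n x) ^ 3 ≤
      (1 / n : ℝ) * ∑ j, (lam j - x j) ^ 2 := by
  classical
  set D := (1 / n : ℝ) * ∑ j, (lam j - x j) ^ 2 with hD
  have hnpos : (0 : ℝ) < n := Nat.cast_pos.mpr hn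
  have hDnn : 0 ≤ D := by
    apply mul_nonneg (by positivity)
    exact Finset.sum_nonneg fun j _ => sq_nonneg _
  set A := {ε : ℝ | 0 < ε ∧ ∀ t, empCDF n lam (t - ε) - ε ≤ empCDF n x t ∧
      empCDF n x t ≤ empCDF n lam (t + ε) + ε} with hA
  -- any ε > 0 with D < ε^3 belongs to A
  have hmem : ∀ ε : ℝ, 0 < ε → D < ε ^ 3 → ε ∈ A := by
    intro ε hε hlt
    have hsum : ∑ j, (lam j - x j) ^ 2 < (n : ℝ) * ε ^ 3 := by
      rw [hD] at hlt
      calc ∑ j, (lam j - x j) ^ 2 = n * ((1/n : ℝ) * ∑ j, (lam j - x j) ^ 2) := by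
            field_simp
        _ < n * ε ^ 3 := by exact (mul_lt_mul_iff_right₀ hnpos).2 hlt
    refine ⟨hε, fun t => ⟨step hn lam x hlam hx ε hε hsum t, ?_⟩⟩
    have hsum' : ∑ j, (x j - lam j) ^ 2 < (n : ℝ) * ε ^ 3 := by
      have : ∑ j, (x j - lam j) ^ 2 = ∑ j, (lam j - x j) ^ 2 := by
        apply Finset.sum_congr rfl; intro j _; ring
      rw [this]; exact hsum
    have := step hn x lam hx hlam ε hε hsum' (t + ε)
    simp only [add_sub_cancel_right] at this
    unfold empCDF
    linarith [this]
  have hbdd : BddBelow A := ⟨0, fun ε hε => hε.1.le⟩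
  have hne : A.Nonempty := ⟨D + 1, hmem _ (by linarith) (by nlinarith [hDnn, mul_nonneg hDnn hDnn, mul_nonneg (mul_nonneg hDnn hDnn) hDnn])⟩
  have hL0 : 0 ≤ levyDist (empCDF n lam) (empCDF n x) :=
    le_csInf hne fun ε hε => hε.1.le
  set L := levyDist (empCDF n lam) (empCDF n x) with hL
  by_contra hcon
  push_neg at hcon
  set c := (D + L ^ 3) / 2 with hc
  have hcpos : 0 < c := by nlinarith
  set ε := c ^ ((3 : ℝ)⁻¹) with hε
  have hεpos : 0 < ε := Real.rpow_pos_of_pos hcpos _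
  have hε3 : ε ^ 3 = c := by
    rw [hε, ← Real.rpow_natCast (c ^ ((3:ℝ)⁻¹)) 3, ← Real.rpow_mul hcpos.le]
    norm_num
  have hεA : ε ∈ A := hmem ε hεpos (by rw [hε3]; simp only [hc]; nlinarith)
  have hLε : L ≤ ε := csInf_le hbdd hεA
  have : L ^ 3 ≤ ε ^ 3 := pow_le_pow_left₀ hL0 hLε 3
  rw [hε3, hc] at this
  nlinarith
end

section
/- Let K(z) = U(z)D(z)U(z)^{-1} where U(z) is a differentiable family of invertible p×p matrices and D(z) = diag(λ_1(z), …, λ_p(z)) is a differentiable diagonal matrix family. If K'(z) = −(1/2)(M(z)·K(z) + K(z)·M(z)) for some matrix family M(z), then the diagonal entries of U^{-1}(z) M(z) U(z) satisfy [U^{-1} M U]_{jj}(z) = −λ_j'(z)/λ_j(z), provided λ_j(z) ≠ 0. -/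
open Matrix

theorem diag_conjugated_logderiv (p : ℕ)
    (U U' M : Matrix (Fin p) (Fin p) ℂ) (lam lam' : Fin p → ℂ)
    (hU : IsUnit U.det)
    (hK' : U' * diagonal lam * U⁻¹ + U * diagonal lam' * U⁻¹ +
        U * diagonal lam * (-(U⁻¹ * U' * U⁻¹)) =
      -(1 / 2 : ℂ) • (M * (U * diagonal lam * U⁻¹) +
        (U * diagonal lam * U⁻¹) * M)) :
    ∀ j, lam j ≠ 0 → (U⁻¹ * M * U) j j = -lam' j / lam j := by
  intro j hj
  have hUi : U⁻¹ * U = 1 := Matrix.nonsing_inv_mul U hU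
  have hUi' : U * U⁻¹ = 1 := Matrix.mul_nonsing_inv U hU
  have h1 := congrArg (fun X => U⁻¹ * X * U) hK'
  simp only [Matrix.mul_add, Matrix.add_mul, Matrix.mul_smul, Matrix.smul_mul,
    Matrix.mul_neg, Matrix.neg_mul] at h1
  have key : U⁻¹ * U' * diagonal lam + diagonal lam' -
      diagonal lam * (U⁻¹ * U') =
      -(1 / 2 : ℂ) • ((U⁻¹ * M * U) * diagonal lam +
        diagonal lam * (U⁻¹ * M * U)) := by
    calc U⁻¹ * U' * diagonal lam + diagonal lam' - diagonal lam * (U⁻¹ * U')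
        = U⁻¹ * (U' * diagonal lam * U⁻¹) * U +
          U⁻¹ * (U * diagonal lam' * U⁻¹) * U +
          -(U⁻¹ * (U * diagonal lam * (U⁻¹ * U' * U⁻¹)) * U) := by
          have hcan : ∀ X : Matrix (Fin p) (Fin p) ℂ, U⁻¹ * (U * X) = X := fun X => by
            rw [← Matrix.mul_assoc, hUi, Matrix.one_mul]
          simp [Matrix.mul_assoc, hUi, hUi', hcan]
          abel
      _ = -(1 / 2 : ℂ) • ((U⁻¹ * M * U) * diagonal lam +
          diagonal lam * (U⁻¹ * M * U)) := by
          rw [show U⁻¹ * (U' * diagonal lam * U⁻¹) * U +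
              U⁻¹ * (U * diagonal lam' * U⁻¹) * U +
              -(U⁻¹ * (U * diagonal lam * (U⁻¹ * U' * U⁻¹)) * U) =
              U⁻¹ * (U' * diagonal lam * U⁻¹ + U * diagonal lam' * U⁻¹ +
                U * diagonal lam * (-(U⁻¹ * U' * U⁻¹))) * U by
            simp [Matrix.mul_add, Matrix.add_mul, Matrix.mul_neg, Matrix.neg_mul]]
          rw [hK']
          simp only [Matrix.mul_smul, Matrix.smul_mul, Matrix.mul_add, Matrix.add_mul]
          congr 1
          congr 1
          · calc U⁻¹ * (M * (U * diagonal lam * U⁻¹)) * U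
                = (U⁻¹ * M * U) * diagonal lam * (U⁻¹ * U) := by
                  simp [Matrix.mul_assoc]
              _ = _ := by rw [hUi]; simp
          · calc U⁻¹ * (U * diagonal lam * U⁻¹ * M) * U
                = (U⁻¹ * U) * diagonal lam * (U⁻¹ * M * U) := by
                  simp [Matrix.mul_assoc]
              _ = _ := by rw [hUi]; simp [Matrix.mul_assoc]
  have hjj := congrFun (congrFun key j) j
  simp only [Matrix.sub_apply, Matrix.add_apply, Matrix.smul_apply,
    Matrix.mul_diagonal, Matrix.diagonal_mul, Matrix.diagonal_apply_eq,
    smul_eq_mul] at hjj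
  rw [eq_div_iff hj]
  linear_combination hjj
end
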